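/- In the Algorithm 1 setting, let F: [0,1]^n → [0,∞) be a nonnegative continuously differentiable DR-submodular function and let p₂* ∈ P. Fix an integer 1 ≤ i ≤ 1/ε and write w = y⁽ⁱ⁻¹⁾⊛z⁽ⁱ⁻¹⁾. If ⟨∇F(w)⊙(1 − z⁽ⁱ⁻¹⁾), a⁽ⁱ⁾ + b⁽ⁱ⁾⊙(1 − y⁽ⁱ⁻¹⁾)⟩ ≥ ⟨∇F(w)⊙(1 − z⁽ⁱ⁻¹⁾), y⁽ⁱ⁻¹⁾ + p₂*⊙(1 − y⁽ⁱ⁻¹⁾)⟩, then ⟨∇F(w)⊙(1 − z⁽ⁱ⁻¹⁾), a⁽ⁱ⁾ + b⁽ⁱ⁾⊙(1 − y⁽ⁱ⁻¹⁾)⟩ ≥ (1−ε)^{i−1}(1−m)·F(p₂*) − F(w) + ⟨∇F(w), y⁽ⁱ⁻¹⁾⊙(1 − z⁽ⁱ⁻¹⁾)⟩. -/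

import Mathlib

open scoped InnerProductSpace
open Pointwise

noncomputable section

/-- Vectors in `ℝ^n`, with the Euclidean (ℓ₂) norm and inner product. -/
abbrev Vec (n : ℕ) := EuclideanSpace ℝ (Fin n)

/-- Membership in the box `[0,1]^n`. -/
def inBox {n : ℕ} (x : Vec n) : Prop := ∀ j, 0 ≤ x j ∧ x j ≤ 1

/-- Coordinate-wise (Hadamard) product `x ⊙ y`. -/
def had {n : ℕ} (x y : Vec n) : Vec n := WithLp.toLp 2 (fun j => x j * y j)

/-- Coordinate-wise probabilistic sum `x ⊛ y`. -/
def psum {n : ℕ} (x y : Vec n) : Vec n := WithLp.toLp 2 (fun j => x j + y j - x j * y j)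

/-- The vector `1 - x` (coordinate-wise). -/
def oneM {n : ℕ} (x : Vec n) : Vec n := WithLp.toLp 2 (fun j => 1 - x j)

/-- ℓ∞-norm. -/
def normInf {n : ℕ} (x : Vec n) : ℝ := ⨆ j, |x j|

/-- DR-submodularity of `F : [0,1]^n → ℝ`. -/
def DRSubmodular {n : ℕ} (F : Vec n → ℝ) : Prop :=
  ∀ a b : Vec n, inBox a → inBox b → (∀ j, a j ≤ b j) →
    ∀ k : ℝ, 0 < k → ∀ i : Fin n, inBox (b + EuclideanSpace.single i k) →
      F (b + EuclideanSpace.single i k) - F b ≤ F (a + EuclideanSpace.single i k) - F a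

/-- `P` is down-closed (with respect to the domain `[0,1]^n`). -/
def downClosed {n : ℕ} (P : Set (Vec n)) : Prop :=
  ∀ x y : Vec n, (∀ j, 0 ≤ x j) → (∀ j, x j ≤ y j) → y ∈ P → x ∈ P

/-- The Algorithm 1 setting: `Q ⊆ [0,1]^n` convex, `P ⊆ [0,1]^n` down-closed convex,
`ε ∈ (0,1)` with `1/ε = N ∈ ℕ`, and sequences `y⁽ⁱ⁾, z⁽ⁱ⁾` built from `a⁽ⁱ⁾ ∈ Q`,
`b⁽ⁱ⁾ ∈ P` satisfying `a⁽ⁱ⁾ + b⁽ⁱ⁾ ⊙ (1 − y⁽ⁱ⁻¹⁾) ≤ 1`, via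
`y⁽ⁱ⁾ = (1−ε)·y⁽ⁱ⁻¹⁾ + ε·a⁽ⁱ⁾` and `z⁽ⁱ⁾ = z⁽ⁱ⁻¹⁾ + ε·(1 − z⁽ⁱ⁻¹⁾) ⊙ b⁽ⁱ⁾`. -/
structure Alg1Setting {n : ℕ} (Q P : Set (Vec n)) (ε : ℝ) (N : ℕ)
    (y z a b : ℕ → Vec n) : Prop where
  hQbox : ∀ x ∈ Q, inBox x
  hQconv : Convex ℝ Q
  hPbox : ∀ x ∈ P, inBox x
  hPconv : Convex ℝ P
  hPdown : downClosed P
  hε0 : 0 < ε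
  hε1 : ε < 1
  hεN : (N : ℝ) * ε = 1
  hy0Q : y 0 ∈ Q
  hy0min : ∀ x ∈ Q, normInf (y 0) ≤ normInf x
  hz0 : z 0 = 0
  haQ : ∀ i, 1 ≤ i → i ≤ N → a i ∈ Q
  hbP : ∀ i, 1 ≤ i → i ≤ N → b i ∈ P
  hfeas : ∀ i, 1 ≤ i → i ≤ N → ∀ j, a i j + b i j * (1 - y (i-1) j) ≤ 1
  hyrec : ∀ i, 1 ≤ i → i ≤ N → y i = (1-ε) • y (i-1) + ε • a i
  hzrec : ∀ i, 1 ≤ i → i ≤ N → z i = z (i-1) + ε • had (oneM (z (i-1))) (b i)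

open Filter Set Topology

section Helpers
variable {n : ℕ}

lemma inner_eq_sum (x y : Vec n) : ⟪x, y⟫_ℝ = ∑ j, x j * y j := by
  simp [PiLp.inner_apply, RCLike.inner_apply, mul_comm]

lemma smul_single' (j : Fin n) (k : ℝ) :
    k • EuclideanSpace.single j (1:ℝ) = EuclideanSpace.single j k := by
  ext l
  by_cases h : l = j <;> simp [EuclideanSpace.single_apply, h]

lemma apply_add_smul (p d : Vec n) (t : ℝ) (j : Fin n) :
    (p + t • d) j = p j + t * d j := rfl

lemma line_hasDerivAt (F : Vec n → ℝ) (g : Vec n) (p d : Vec n) (t : ℝ)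
    (h : HasGradientAt F g (p + t • d)) :
    HasDerivAt (fun s : ℝ => F (p + s • d)) (⟪g, d⟫_ℝ) t := by
  have h1 : HasDerivAt (fun s : ℝ => p + s • d) d t := by
    simpa using ((hasDerivAt_id t).smul_const d).const_add p
  have h2 := h.hasFDerivAt.comp_hasDerivAt t h1
  simp [InnerProductSpace.toDual_apply_apply] at h2
  exact h2

lemma grad_anti (F : Vec n → ℝ) (G : Vec n → Vec n)
    (hDR : DRSubmodular F) (hGrad : ∀ x, inBox x → HasGradientAt F (G x) x)
    (u v : Vec n) (hu : inBox u) (hv : inBox v) (huv : ∀ j, u j ≤ v j)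
    (j : Fin n) (hvj : v j < 1) : G v j ≤ G u j := by
  have key : ∀ x : Vec n, inBox x → Tendsto
      (fun k : ℝ => (F (x + EuclideanSpace.single j k) - F x) / k) (𝓝[>] 0) (𝓝 (G x j)) := by
    intro x hx
    have hd : HasDerivAt (fun s : ℝ => F (x + s • EuclideanSpace.single j (1:ℝ)))
        (⟪G x, EuclideanSpace.single j (1:ℝ)⟫_ℝ) 0 := by
      apply line_hasDerivAt
      simpa using hGrad x hx
    have hval : ⟪G x, EuclideanSpace.single j (1:ℝ)⟫_ℝ = G x j := by
      rw [EuclideanSpace.inner_single_right]; simp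
    rw [hasDerivAt_iff_tendsto_slope, hval] at hd
    have hd2 := hd.mono_left (nhdsWithin_mono 0 (fun k hk => ne_of_gt hk))
    refine hd2.congr' ?_
    filter_upwards [self_mem_nhdsWithin] with k hk
    rw [slope_def_field]
    rw [smul_single']
    simp
  have hev : ∀ᶠ k in 𝓝[>] (0:ℝ),
      (F (v + EuclideanSpace.single j k) - F v) / k ≤
      (F (u + EuclideanSpace.single j k) - F u) / k := by
    filter_upwards [Ioo_mem_nhdsGT_of_mem (Set.left_mem_Ico.2 (sub_pos.2 hvj))] with k hk
    have hkpos := hk.1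
    have hbox : inBox (v + EuclideanSpace.single j k) := by
      intro l
      by_cases h : l = j
      · subst h
        have := hv l
        constructor <;> simp [EuclideanSpace.single_apply] <;> nlinarith [hk.2]
      · have := hv l
        simpa [EuclideanSpace.single_apply, h] using this
    have := hDR u v hu hv huv k hkpos j hbox
    exact div_le_div_of_nonneg_right this hkpos.le |>.trans_eq rfl
  exact le_of_tendsto_of_tendsto (key v hv) (key u hu) hev

lemma inner_anti (F : Vec n → ℝ) (G : Vec n → Vec n)
    (hDR : DRSubmodular F) (hGrad : ∀ x, inBox x → HasGradientAt F (G x) x)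
    (u v d : Vec n) (hu : inBox u) (hv : inBox v) (huv : ∀ j, u j ≤ v j)
    (hd : ∀ j, 0 ≤ d j) (hlt : ∀ j, 0 < d j → v j < 1) :
    ⟪G v, d⟫_ℝ ≤ ⟪G u, d⟫_ℝ := by
  rw [inner_eq_sum, inner_eq_sum]
  refine Finset.sum_le_sum fun j _ => ?_
  rcases (hd j).lt_or_eq with h | h
  · exact mul_le_mul_of_nonneg_right
      (grad_anti F G hDR hGrad u v hu hv huv j (hlt j h)) (hd j)
  · simp [← h]

lemma line_concave (F : Vec n → ℝ) (G : Vec n → Vec n)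
    (hDR : DRSubmodular F) (hGrad : ∀ x, inBox x → HasGradientAt F (G x) x)
    (p d : Vec n) (hd : ∀ j, 0 ≤ d j) (T : ℝ) (hT : 0 < T)
    (hbox : ∀ t ∈ Set.Icc (0:ℝ) T, inBox (p + t • d)) :
    ConcaveOn ℝ (Set.Icc (0:ℝ) T) (fun t => F (p + t • d)) := by
  have hder : ∀ t ∈ Set.Icc (0:ℝ) T,
      HasDerivAt (fun s => F (p + s • d)) (⟪G (p + t • d), d⟫_ℝ) t :=
    fun t ht => line_hasDerivAt F _ p d t (hGrad _ (hbox t ht))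
  refine AntitoneOn.concaveOn_of_deriv (convex_Icc 0 T)
    (fun t ht => (hder t ht).continuousAt.continuousWithinAt) ?_ ?_
  · rw [interior_Icc]
    exact fun t ht =>
      ((hder t (Ioo_subset_Icc_self ht)).differentiableAt).differentiableWithinAt
  · rw [interior_Icc]
    intro s hs t ht hst
    rw [(hder t (Ioo_subset_Icc_self ht)).deriv, (hder s (Ioo_subset_Icc_self hs)).deriv]
    refine inner_anti F G hDR hGrad (p + s • d) (p + t • d) d
      (hbox s (Ioo_subset_Icc_self hs)) (hbox t (Ioo_subset_Icc_self ht)) ?_ hd ?_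
    · intro j
      rw [apply_add_smul, apply_add_smul]
      have := hd j; nlinarith
    · intro j hdj
      have hTj := (hbox T ⟨hT.le, le_rfl⟩ j).2
      rw [apply_add_smul] at hTj ⊢
      nlinarith [ht.2]

lemma first_order (F : Vec n → ℝ) (G : Vec n → Vec n)
    (hDR : DRSubmodular F) (hGrad : ∀ x, inBox x → HasGradientAt F (G x) x)
    (w v : Vec n) (hw : inBox w) (hv : inBox v) (hle : ∀ j, w j ≤ v j) :
    F v - F w ≤ ⟪G w, v - w⟫_ℝ := by
  set d := v - w with hdd
  have hdco : ∀ j, d j = v j - w j := fun j => rfl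
  have hd0 : ∀ j, 0 ≤ d j := fun j => by rw [hdco]; linarith [hle j]
  have hbox : ∀ t ∈ Set.Icc (0:ℝ) 1, inBox (w + t • d) := by
    intro t ht j
    rw [apply_add_smul, hdco]
    have h1 := hw j; have h2 := hv j; have h3 := hle j
    constructor <;> nlinarith [ht.1, ht.2]
  have hder : ∀ t ∈ Set.Icc (0:ℝ) 1,
      HasDerivAt (fun s => F (w + s • d)) (⟪G (w + t • d), d⟫_ℝ) t :=
    fun t ht => line_hasDerivAt F _ w d t (hGrad _ (hbox t ht))
  obtain ⟨c, hc, hceq⟩ := exists_hasDerivAt_eq_slope (fun s => F (w + s • d))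
    (fun t => ⟪G (w + t • d), d⟫_ℝ) one_pos
    (fun t ht => (hder t ht).continuousAt.continuousWithinAt)
    (fun t ht => hder t (Set.Ioo_subset_Icc_self ht))
  have h01 : F (w + (1:ℝ) • d) = F v := by norm_num [hdd]
  have h00 : F (w + (0:ℝ) • d) = F w := by norm_num
  rw [h01, h00] at hceq
  have hle2 : ⟪G (w + c • d), d⟫_ℝ ≤ ⟪G w, d⟫_ℝ := by
    refine inner_anti F G hDR hGrad w (w + c • d) d hw
      (hbox c (Set.Ioo_subset_Icc_self hc)) ?_ hd0 ?_
    · intro j; rw [apply_add_smul]; have := hd0 j; nlinarith [hc.1]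
    · intro j hdj
      rw [apply_add_smul]
      have := (hv j).2
      rw [hdco] at hdj ⊢
      nlinarith [hc.2]
  calc F v - F w = ⟪G (w + c • d), d⟫_ℝ := by rw [hceq]; ring
    _ ≤ ⟪G w, d⟫_ℝ := hle2

lemma lemB (F : Vec n → ℝ) (G : Vec n → Vec n)
    (hDR : DRSubmodular F) (hGrad : ∀ x, inBox x → HasGradientAt F (G x) x)
    (hF0 : ∀ x, inBox x → 0 ≤ F x) (p x : Vec n)
    (hp : inBox p) (hx : inBox x) (c : ℝ) (hc0 : 0 ≤ c) (hc1 : c ≤ 1)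
    (hxc : ∀ j, x j ≤ 1 - c) : c * F p ≤ F (psum p x) := by
  rcases hc1.lt_or_eq with hc | hc
  · set T : ℝ := (1 - c)⁻¹ with hTdef
    have hT : 0 < T := inv_pos.2 (by linarith)
    set d : Vec n := had x (oneM p) with hddef
    have hdco : ∀ j, d j = x j * (1 - p j) := fun j => rfl
    have hd0 : ∀ j, 0 ≤ d j := fun j => by
      rw [hdco]; have := hx j; have := hp j; nlinarith
    have hTx : ∀ j, T * x j ≤ 1 := by
      intro j
      have h1 : T * x j ≤ T * (1 - c) := mul_le_mul_of_nonneg_left (hxc j) hT.le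
      have h2 : T * (1 - c) = 1 := inv_mul_cancel₀ (by linarith)
      linarith
    have hbox : ∀ t ∈ Set.Icc (0:ℝ) T, inBox (p + t • d) := by
      intro t ht j
      rw [apply_add_smul, hdco]
      have h1 := hp j; have h2 := hx j
      have h3 : t * x j ≤ 1 := by
        have : t * x j ≤ T * x j := mul_le_mul_of_nonneg_right ht.2 h2.1
        linarith [hTx j]
      constructor <;> nlinarith [ht.1]
    have hconc := line_concave F G hDR hGrad p d hd0 T hT hbox
    have h0mem : (0:ℝ) ∈ Set.Icc (0:ℝ) T := ⟨le_rfl, hT.le⟩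
    have hTmem : T ∈ Set.Icc (0:ℝ) T := ⟨hT.le, le_rfl⟩
    have hcomb := hconc.2 h0mem hTmem hc0 (by linarith : (0:ℝ) ≤ 1 - c) (by ring)
    have hptT : (c • (0:ℝ) + (1 - c) • T) = 1 := by
      simp [smul_eq_mul]
      exact mul_inv_cancel₀ (by linarith)
    rw [hptT] at hcomb
    have hFT : 0 ≤ F (p + T • d) := hF0 _ (hbox T hTmem)
    have h1 : F (p + (1:ℝ) • d) = F (psum p x) := by
      congr 1
      ext j
      rw [apply_add_smul, hdco]
      show p j + 1 * (x j * (1 - p j)) = p j + x j - p j * x j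
      ring
    have h0 : F (p + (0:ℝ) • d) = F p := by norm_num
    simp only [smul_eq_mul] at hcomb
    rw [h1, h0] at hcomb
    nlinarith
  · have hx0 : ∀ j, x j = 0 := fun j =>
      le_antisymm (by have := hxc j; linarith [hc]) (hx j).1
    have : psum p x = p := by
      ext j
      show p j + x j - p j * x j = p j
      rw [hx0 j]; ring
    rw [this, hc, one_mul]

end Helpers

section Setting
variable {n : ℕ} {Q P : Set (Vec n)} {ε : ℝ} {N : ℕ} {y z a b : ℕ → Vec n}
  (H : Alg1Setting Q P ε N y z a b)
include H

lemma ycomp (i : ℕ) (h1 : 1 ≤ i) (hN : i ≤ N) (j : Fin n) :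
    y i j = (1-ε) * y (i-1) j + ε * a i j := by
  rw [H.hyrec i h1 hN]; rfl

lemma zcomp (i : ℕ) (h1 : 1 ≤ i) (hN : i ≤ N) (j : Fin n) :
    z i j = z (i-1) j + ε * ((1 - z (i-1) j) * b i j) := by
  rw [H.hzrec i h1 hN]; rfl

lemma y_box : ∀ i, i ≤ N → inBox (y i) := by
  intro i
  induction i with
  | zero => exact fun _ => H.hQbox _ H.hy0Q
  | succ k ih =>
    intro hk j
    have hk' : k ≤ N := Nat.le_of_succ_le hk
    have h1 : 1 ≤ k + 1 := Nat.succ_le_succ (Nat.zero_le k)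
    have hc := ycomp H (k+1) h1 hk j
    simp only [Nat.add_sub_cancel] at hc
    rw [hc]
    have h2 := ih hk' j
    have h3 := (H.hQbox _ (H.haQ (k+1) h1 hk)) j
    have h4 := H.hε0; have h5 := H.hε1
    constructor <;> nlinarith

lemma z_box : ∀ i, i ≤ N → inBox (z i) := by
  intro i
  induction i with
  | zero => intro _ j; rw [H.hz0]; norm_num
  | succ k ih =>
    intro hk j
    have hk' : k ≤ N := Nat.le_of_succ_le hk
    have h1 : 1 ≤ k + 1 := Nat.succ_le_succ (Nat.zero_le k)
    have hc := zcomp H (k+1) h1 hk j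
    simp only [Nat.add_sub_cancel] at hc
    rw [hc]
    have h2 := ih hk' j
    have h3 := (H.hPbox _ (H.hbP (k+1) h1 hk)) j
    have h4 := H.hε0; have h5 := H.hε1
    have e1 : (0:ℝ) ≤ 1 - z k j := by linarith [h2.2]
    have e2 : (0:ℝ) ≤ 1 - ε * b (k+1) j := by nlinarith [h3.1, h3.2]
    constructor
    · nlinarith [mul_nonneg (mul_nonneg h4.le e1) h3.1]
    · nlinarith [mul_nonneg e1 e2]

lemma key_w (m : ℝ) (hm : m = normInf (y 0)) (hm1 : m ≤ 1) :
    ∀ i, i ≤ N → ∀ j, (1-ε)^i * (1-m) ≤ (1 - y i j) * (1 - z i j) := by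
  intro i
  induction i with
  | zero =>
    intro _ j
    have hy0 : y 0 j ≤ m := by
      rw [hm, normInf]
      exact le_trans (le_abs_self _)
        (le_ciSup (f := fun j => |y 0 j|) (Set.Finite.bddAbove (Set.finite_range _)) j)
    have hz0 : z 0 j = 0 := by rw [H.hz0]; rfl
    rw [hz0]
    simp
    linarith
  | succ k ih =>
    intro hk j
    have hk' : k ≤ N := Nat.le_of_succ_le hk
    have h1 : 1 ≤ k + 1 := Nat.succ_le_succ (Nat.zero_le k)
    have hyc := ycomp H (k+1) h1 hk j
    have hzc := zcomp H (k+1) h1 hk j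
    have hf := H.hfeas (k+1) h1 hk j
    simp only [Nat.add_sub_cancel] at hyc hzc hf
    have hyb := y_box H k hk' j
    have hzb := z_box H k hk' j
    have hbb := (H.hPbox _ (H.hbP (k+1) h1 hk)) j
    have hε0 := H.hε0; have hε1 := H.hε1
    have ihj := ih hk' j
    have hP0 : 0 ≤ (1-ε)^k * (1-m) :=
      mul_nonneg (pow_nonneg (by linarith) _) (by linarith)
    have huv0 : 0 ≤ (1 - y k j) * (1 - z k j) := le_trans hP0 ihj
    rw [hyc, hzc]
    have h3 : (1 - y k j) * (1 - ε + ε * b (k+1) j) ≤ 1 - ((1-ε) * y k j + ε * a (k+1) j) := by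
      nlinarith
    have h6 : 0 ≤ 1 - ε + ε * b (k+1) j := by nlinarith
    have h4 : (1 - (z k j + ε * ((1 - z k j) * b (k+1) j)))
        = (1 - z k j) * (1 - ε * b (k+1) j) := by ring
    have h5 : 0 ≤ 1 - ε * b (k+1) j := by nlinarith
    have h8 : 0 ≤ ε^2 * b (k+1) j * (1 - b (k+1) j) := by
      apply mul_nonneg (mul_nonneg (by positivity) hbb.1) (by linarith)
    have h7 : (1 - y k j) * (1 - z k j) * (1-ε) ≤
        ((1 - y k j) * (1 - ε + ε * b (k+1) j)) * ((1 - z k j) * (1 - ε * b (k+1) j)) := by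
      nlinarith [mul_nonneg huv0 h8]
    have h9 : ((1 - y k j) * (1 - ε + ε * b (k+1) j)) * ((1 - z k j) * (1 - ε * b (k+1) j))
        ≤ (1 - ((1-ε) * y k j + ε * a (k+1) j)) * (1 - (z k j + ε * ((1 - z k j) * b (k+1) j))) := by
      rw [h4]
      apply mul_le_mul h3 le_rfl (mul_nonneg (by linarith [hzb.2]) h5)
        (le_trans (mul_nonneg (by linarith [hyb.2]) h6) h3)
    have h10 : (1-ε)^k * (1-m) * (1-ε) ≤ (1 - y k j) * (1 - z k j) * (1-ε) :=
      mul_le_mul_of_nonneg_right ihj (by linarith)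
    calc (1-ε)^(k+1) * (1-m) = (1-ε)^k * (1-m) * (1-ε) := by ring
      _ ≤ _ := le_trans h10 (le_trans h7 h9)

end Setting

/-- Corollary 4.8 / `cor:advance_second_half` together with Lemma 4.7:
in the Algorithm 1 setting, with `F` nonnegative continuously differentiable DR-submodular
(gradient `G`), `p₂* ∈ P`, `m = ‖y⁽⁰⁾‖∞` and `w = y⁽ⁱ⁻¹⁾ ⊛ z⁽ⁱ⁻¹⁾`: if the LP value at
`(a⁽ⁱ⁾, b⁽ⁱ⁾)` is at least its value at `(y⁽ⁱ⁻¹⁾, p₂*)`, then it is at least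
`(1−ε)^{i−1}(1−m)·F(p₂*) − F(w) + ⟪∇F(w), y⁽ⁱ⁻¹⁾ ⊙ (1 − z⁽ⁱ⁻¹⁾)⟫`. -/


theorem stmt_7 {n : ℕ} (Q P : Set (Vec n)) (ε : ℝ) (N : ℕ) (y z a b : ℕ → Vec n)
    (H : Alg1Setting Q P ε N y z a b)
    (F : Vec n → ℝ) (G : Vec n → Vec n)
    (hF0 : ∀ x, inBox x → 0 ≤ F x)
    (hDR : DRSubmodular F)
    (hGrad : ∀ x, inBox x → HasGradientAt F (G x) x)
    (hGcont : ContinuousOn G {x : Vec n | inBox x})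
    (p₂ : Vec n) (hp₂ : p₂ ∈ P)
    (m : ℝ) (hm : m = normInf (y 0))
    (i : ℕ) (hi1 : 1 ≤ i) (hiN : i ≤ N)
    (w : Vec n) (hw : w = psum (y (i-1)) (z (i-1)))
    (hobj : ⟪had (G w) (oneM (z (i-1))), y (i-1) + had p₂ (oneM (y (i-1)))⟫_ℝ ≤
            ⟪had (G w) (oneM (z (i-1))), a i + had (b i) (oneM (y (i-1)))⟫_ℝ) :
    (1 - ε)^(i-1) * (1 - m) * F p₂ - F w
      + ⟪G w, had (y (i-1)) (oneM (z (i-1)))⟫_ℝ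
    ≤ ⟪had (G w) (oneM (z (i-1))), a i + had (b i) (oneM (y (i-1)))⟫_ℝ := by
  have hy0box : inBox (y 0) := H.hQbox _ H.hy0Q
  have hm0 : 0 ≤ m := by
    rw [hm, normInf]
    exact Real.iSup_nonneg fun j => abs_nonneg _
  have hm1 : m ≤ 1 := by
    rw [hm, normInf]
    rcases isEmpty_or_nonempty (Fin n) with h | h
    · simp [Real.iSup_of_isEmpty]
    · exact ciSup_le fun j => abs_le.2 ⟨by linarith [(hy0box j).1], (hy0box j).2⟩
  have hi' : i - 1 ≤ N := le_trans (Nat.sub_le i 1) hiN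
  have hYb : inBox (y (i-1)) := y_box H _ hi'
  have hZb : inBox (z (i-1)) := z_box H _ hi'
  have hwco : ∀ j, w j = y (i-1) j + z (i-1) j - y (i-1) j * z (i-1) j := by
    intro j; rw [hw]; rfl
  have hwb : inBox w := by
    intro j
    rw [hwco j]
    have h1 := hYb j; have h2 := hZb j
    constructor <;> nlinarith
  have hp2b : inBox p₂ := H.hPbox _ hp₂
  set c : ℝ := (1-ε)^(i-1) * (1-m) with hcdef
  have hε0 := H.hε0; have hε1 := H.hε1
  have hc0 : 0 ≤ c := mul_nonneg (pow_nonneg (by linarith) _) (by linarith)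
  have hc1 : c ≤ 1 := by
    have h1 : (1-ε)^(i-1) ≤ 1 := pow_le_one₀ (by linarith) (by linarith)
    nlinarith
  have hwc : ∀ j, w j ≤ 1 - c := by
    intro j
    have hkey := key_w H m hm hm1 (i-1) hi' j
    rw [hwco j]
    nlinarith
  set v : Vec n := psum w p₂ with hvdef
  have hvco : ∀ j, v j = w j + p₂ j - w j * p₂ j := fun j => rfl
  have hvb : inBox v := by
    intro j
    rw [hvco j]
    have h1 := hwb j; have h2 := hp2b j
    constructor <;> nlinarith
  have hwv : ∀ j, w j ≤ v j := by
    intro j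
    rw [hvco j]
    have h1 := hwb j; have h2 := hp2b j
    nlinarith
  have hB : c * F p₂ ≤ F v := by
    have h := lemB F G hDR hGrad hF0 p₂ w hp2b hwb c hc0 hc1 hwc
    have he : psum p₂ w = v := by
      ext j
      show p₂ j + w j - p₂ j * w j = w j + p₂ j - w j * p₂ j
      ring
    rwa [he] at h
  have hA : F v - F w ≤ ⟪G w, v - w⟫_ℝ := first_order F G hDR hGrad w v hwb hvb hwv
  refine le_trans ?_ hobj
  have hexp : ⟪had (G w) (oneM (z (i-1))), y (i-1) + had p₂ (oneM (y (i-1)))⟫_ℝ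
      = ⟪G w, had (y (i-1)) (oneM (z (i-1)))⟫_ℝ + ⟪G w, v - w⟫_ℝ := by
    rw [inner_eq_sum, inner_eq_sum, inner_eq_sum, ← Finset.sum_add_distrib]
    refine Finset.sum_congr rfl fun j _ => ?_
    have e1 : (v - w) j = v j - w j := rfl
    have e2 : (y (i-1) + had p₂ (oneM (y (i-1)))) j
        = y (i-1) j + p₂ j * (1 - y (i-1) j) := rfl
    rw [e1, e2, hvco j, hwco j]
    show had (G w) (oneM (z (i-1))) j * _ = _
    simp only [had, oneM]
    ring
  rw [hexp]
  have hfin : c * F p₂ - F w ≤ ⟪G w, v - w⟫_ℝ := by linarith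
  linarith
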